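/- Let A: [t₀,t_f] → ℝ^{n×n} be of class C¹ with ‖A(t)‖ ≤ M_A > 0 and ‖Ȧ(t)‖ ≤ M_{Ȧ} for all t, and let φ be the associated transition matrix. Fix a < b in [t₀,t_f] and define ψ(t,a,b) = I + (φ(b,a) − I)(t−a)/(b−a). Then for all t ∈ [a,b], ‖φ(t,a) − ψ(t,a,b)‖ ≤ ((t−a)/(b−a)) · γ(b−a), where γ(s) = (e^{s M_A} − 1 − s M_A)(1 + M_{Ȧ}/M_A²). -/

import Mathlib

open Set MeasureTheory intervalIntegral

theorem transition_matrix_interpolation_bound {E : Type*} [NormedAddCommGroup E]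
    [NormedSpace ℝ E]
    (t₀ tf MA MdA : ℝ) (A A' : ℝ → E →L[ℝ] E) (φ : ℝ → ℝ → E →L[ℝ] E)
    (hA' : ∀ t ∈ Set.Icc t₀ tf, HasDerivWithinAt A (A' t) (Set.Icc t₀ tf) t)
    (hA'c : ContinuousOn A' (Set.Icc t₀ tf))
    (hMA : 0 < MA)
    (hA_bound : ∀ t ∈ Set.Icc t₀ tf, ‖A t‖ ≤ MA)
    (hA'_bound : ∀ t ∈ Set.Icc t₀ tf, ‖A' t‖ ≤ MdA)
    (hode : ∀ s ∈ Set.Icc t₀ tf, ∀ t ∈ Set.Icc t₀ tf,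
      HasDerivWithinAt (fun τ => φ τ s) ((A t).comp (φ t s)) (Set.Icc t₀ tf) t)
    (hinit : ∀ s ∈ Set.Icc t₀ tf, φ s s = ContinuousLinearMap.id ℝ E)
    (a b : ℝ) (ha : a ∈ Set.Icc t₀ tf) (hb : b ∈ Set.Icc t₀ tf) (hab : a < b) :
    ∀ t ∈ Set.Icc a b,
      ‖φ t a - (ContinuousLinearMap.id ℝ E
          + ((t - a) / (b - a)) • (φ b a - ContinuousLinearMap.id ℝ E))‖
        ≤ ((t - a) / (b - a)) *
            ((Real.exp ((b - a) * MA) - 1 - (b - a) * MA) * (1 + MdA / MA ^ 2)) := by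
  intro t ht
  have hta : a ≤ t := ht.1
  have htb : t ≤ b := ht.2
  have hba : (0:ℝ) < b - a := sub_pos.2 hab
  have hba' : (b - a) ≠ 0 := ne_of_gt hba
  have hMA' : MA ≠ 0 := ne_of_gt hMA
  have hsubΩ : Set.Icc a b ⊆ Set.Icc t₀ tf := fun x hx => ⟨ha.1.trans hx.1, hx.2.trans hb.2⟩
  have haΩ : a ∈ Set.Icc t₀ tf := ha
  have htΩ : t ∈ Set.Icc t₀ tf := hsubΩ ht
  have hMdA : 0 ≤ MdA := le_trans (norm_nonneg _) (hA'_bound a haΩ)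
  have hc0 : (0:ℝ) ≤ MA ^ 2 + MdA := add_nonneg (sq_nonneg _) hMdA
  -- continuity facts
  have hφcont : ContinuousOn (fun τ => φ τ a) (Set.Icc t₀ tf) :=
    fun τ hτ => (hode a haΩ τ hτ).continuousWithinAt
  have hAcont : ContinuousOn A (Set.Icc t₀ tf) := fun τ hτ => (hA' τ hτ).continuousWithinAt
  have hgcont : ContinuousOn (fun τ => (A τ).comp (φ τ a)) (Set.Icc t₀ tf) :=
    hAcont.clm_comp hφcont
  have hGcont : ContinuousOn
      (fun τ => (A' τ).comp (φ τ a) + (A τ).comp ((A τ).comp (φ τ a))) (Set.Icc t₀ tf) :=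
    (hA'c.clm_comp hφcont).add (hAcont.clm_comp (hAcont.clm_comp hφcont))
  -- Gronwall bound on ‖φ τ a‖
  have hφbound : ∀ τ ∈ Set.Icc a b, ‖φ τ a‖ ≤ Real.exp (MA * (τ - a)) := by
    intro τ hτ
    have H := norm_le_gronwallBound_of_norm_deriv_right_le (f := fun τ => φ τ a)
      (f' := fun τ => (A τ).comp (φ τ a)) (δ := 1) (K := MA) (ε := 0) (a := a) (b := b)
      (hφcont.mono hsubΩ)
      (fun x hx => (hode a haΩ x (hsubΩ ⟨hx.1, hx.2.le⟩)).mono_of_mem_nhdsWithin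
        (by
          rw [mem_nhdsWithin]
          exact ⟨Set.Iio tf, isOpen_Iio, lt_of_lt_of_le hx.2 hb.2,
            fun y hy => ⟨(ha.1.trans hx.1).trans hy.2, hy.1.le⟩⟩))
      (by show ‖φ a a‖ ≤ 1
          rw [hinit a haΩ]; exact ContinuousLinearMap.norm_id_le)
      (fun x hx => by
        rw [add_zero]
        exact le_trans (ContinuousLinearMap.opNorm_comp_le _ _)
          (mul_le_mul_of_nonneg_right (hA_bound x (hsubΩ ⟨hx.1, hx.2.le⟩)) (norm_nonneg _)))
      τ hτ
    rwa [gronwallBound_ε0, one_mul] at H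
  -- bound on the derivative of g
  have hGbound : ∀ τ ∈ Set.Icc a b,
      ‖(A' τ).comp (φ τ a) + (A τ).comp ((A τ).comp (φ τ a))‖
        ≤ (MA ^ 2 + MdA) * Real.exp (MA * (τ - a)) := by
    intro τ hτ
    have hφb := hφbound τ hτ
    have h1 : ‖(A' τ).comp (φ τ a)‖ ≤ MdA * Real.exp (MA * (τ - a)) :=
      le_trans (ContinuousLinearMap.opNorm_comp_le _ _)
        (mul_le_mul (hA'_bound τ (hsubΩ hτ)) hφb (norm_nonneg _) hMdA)
    have h2i : ‖(A τ).comp (φ τ a)‖ ≤ MA * Real.exp (MA * (τ - a)) :=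
      le_trans (ContinuousLinearMap.opNorm_comp_le _ _)
        (mul_le_mul (hA_bound τ (hsubΩ hτ)) hφb (norm_nonneg _) hMA.le)
    have h2 : ‖(A τ).comp ((A τ).comp (φ τ a))‖ ≤ MA * (MA * Real.exp (MA * (τ - a))) :=
      le_trans (ContinuousLinearMap.opNorm_comp_le _ _)
        (mul_le_mul (hA_bound τ (hsubΩ hτ)) h2i (norm_nonneg _) hMA.le)
    calc ‖(A' τ).comp (φ τ a) + (A τ).comp ((A τ).comp (φ τ a))‖
        ≤ ‖(A' τ).comp (φ τ a)‖ + ‖(A τ).comp ((A τ).comp (φ τ a))‖ := norm_add_le _ _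
      _ ≤ MdA * Real.exp (MA * (τ - a)) + MA * (MA * Real.exp (MA * (τ - a))) := add_le_add h1 h2
      _ = (MA ^ 2 + MdA) * Real.exp (MA * (τ - a)) := by ring
  -- derivative of g within Ω
  have hgderiv : ∀ τ ∈ Set.Icc t₀ tf,
      HasDerivWithinAt (fun σ => (A σ).comp (φ σ a))
        ((A' τ).comp (φ τ a) + (A τ).comp ((A τ).comp (φ τ a))) (Set.Icc t₀ tf) τ :=
    fun τ hτ => (hA' τ hτ).clm_comp (hode a haΩ τ hτ)
  -- neighborhood helper
  have hnhds : ∀ x ∈ Set.Ico a b, Set.Icc t₀ tf ∈ nhdsWithin x (Set.Ici x) := by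
    intro x hx
    rw [mem_nhdsWithin]
    exact ⟨Set.Iio tf, isOpen_Iio, lt_of_lt_of_le hx.2 hb.2,
      fun y hy => ⟨(ha.1.trans hx.1).trans hy.2, hy.1.le⟩⟩
  -- derivative of U τ = (τ-a) • g τ - φ τ a + id
  have hU : ∀ τ ∈ Set.Icc t₀ tf,
      HasDerivWithinAt
        (fun σ => (σ - a) • (A σ).comp (φ σ a) - φ σ a + ContinuousLinearMap.id ℝ E)
        ((τ - a) • ((A' τ).comp (φ τ a) + (A τ).comp ((A τ).comp (φ τ a))))
        (Set.Icc t₀ tf) τ := by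
    intro τ hτ
    have h := ((((hasDerivAt_id τ).sub_const a).hasDerivWithinAt).smul
      (hgderiv τ hτ)).sub (hode a haΩ τ hτ)
    have h2 := h.add_const (ContinuousLinearMap.id ℝ E)
    simpa using h2
  -- derivative of W τ = (τ-b) • g τ - φ τ a
  have hW : ∀ τ ∈ Set.Icc t₀ tf,
      HasDerivWithinAt
        (fun σ => (σ - b) • (A σ).comp (φ σ a) - φ σ a)
        ((τ - b) • ((A' τ).comp (φ τ a) + (A τ).comp ((A τ).comp (φ τ a))))
        (Set.Icc t₀ tf) τ := by
    intro τ hτ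
    have h := ((((hasDerivAt_id τ).sub_const b).hasDerivWithinAt).smul
      (hgderiv τ hτ)).sub (hode a haΩ τ hτ)
    exact h.congr_deriv (by simp [smul_add])
  set L : ℝ := (t - a) / (b - a) with hLdef
  have hL0 : 0 ≤ L := div_nonneg (sub_nonneg.2 hta) hba.le
  have hL1 : L ≤ 1 := (div_le_one hba).2 (sub_le_sub_right htb a)
  have hLba : L * (b - a) = t - a := div_mul_cancel₀ _ hba'
  -- bound on X := (t-a) • g t - φ t a + id  via mean value comparison on [a, b]
  have hnX : ‖(t - a) • (A t).comp (φ t a) - φ t a + ContinuousLinearMap.id ℝ E‖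
      ≤ (MA ^ 2 + MdA) *
        ((Real.exp (MA * (t - a)) * (MA * (t - a) - 1) + 1) / MA ^ 2) := by
    have hBX : ∀ x : ℝ, HasDerivAt
        (fun τ => (MA ^ 2 + MdA) * ((Real.exp (MA * (τ - a)) * (MA * (τ - a) - 1) + 1) / MA ^ 2))
        ((MA ^ 2 + MdA) * ((x - a) * Real.exp (MA * (x - a)))) x := by
      intro x
      have h1 : HasDerivAt (fun σ : ℝ => MA * (σ - a)) MA x := by
        simpa using ((hasDerivAt_id x).sub_const a).const_mul MA
      have h2 : HasDerivAt (fun σ : ℝ => Real.exp (MA * (σ - a)))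
          (Real.exp (MA * (x - a)) * MA) x := h1.exp
      have h3 : HasDerivAt (fun σ : ℝ => MA * (σ - a) - 1) MA x := h1.sub_const 1
      have h4 := ((((h2.mul h3).add_const 1).div_const (MA ^ 2)).const_mul (MA ^ 2 + MdA))
      refine h4.congr_deriv ?_
      congr 1
      rw [div_eq_iff (pow_ne_zero 2 hMA')]
      ring
    have H := image_norm_le_of_norm_deriv_right_le_deriv_boundary
      (f := fun σ => (σ - a) • (A σ).comp (φ σ a) - φ σ a + ContinuousLinearMap.id ℝ E)
      (f' := fun τ => (τ - a) • ((A' τ).comp (φ τ a) + (A τ).comp ((A τ).comp (φ τ a))))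
      (a := a) (b := b)
      (((((continuous_id.sub continuous_const).continuousOn).smul hgcont).sub
        hφcont).add continuousOn_const |>.mono hsubΩ)
      (fun x hx => (hU x (hsubΩ ⟨hx.1, hx.2.le⟩)).mono_of_mem_nhdsWithin (hnhds x hx))
      (by
        show ‖(a - a) • (A a).comp (φ a a) - φ a a + ContinuousLinearMap.id ℝ E‖ ≤ _
        rw [hinit a haΩ]
        simp)
      hBX
      (fun x hx => by
        show ‖(x - a) • ((A' x).comp (φ x a) + (A x).comp ((A x).comp (φ x a)))‖ ≤ _
        rw [norm_smul (x - a) ((A' x).comp (φ x a) + (A x).comp ((A x).comp (φ x a))),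
          Real.norm_eq_abs, abs_of_nonneg (sub_nonneg.2 hx.1)]
        calc (x - a) * ‖(A' x).comp (φ x a) + (A x).comp ((A x).comp (φ x a))‖
            ≤ (x - a) * ((MA ^ 2 + MdA) * Real.exp (MA * (x - a))) :=
              mul_le_mul_of_nonneg_left (hGbound x ⟨hx.1, hx.2.le⟩) (sub_nonneg.2 hx.1)
          _ = (MA ^ 2 + MdA) * ((x - a) * Real.exp (MA * (x - a))) := by ring)
      ht
    exact H
  -- bound on Y := ((b-b) • g b - φ b a) - ((t-b) • g t - φ t a) via comparison on [t, b]
  have hnY : ‖((b - b) • (A b).comp (φ b a) - φ b a)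
        - ((t - b) • (A t).comp (φ t a) - φ t a)‖
      ≤ (MA ^ 2 + MdA) *
        ((Real.exp (MA * (b - a)) * (MA * (b - b) + 1)
          - Real.exp (MA * (t - a)) * (MA * (b - t) + 1)) / MA ^ 2) := by
    have hBY : ∀ x : ℝ, HasDerivAt
        (fun τ => (MA ^ 2 + MdA) * ((Real.exp (MA * (τ - a)) * (MA * (b - τ) + 1)
          - Real.exp (MA * (t - a)) * (MA * (b - t) + 1)) / MA ^ 2))
        ((MA ^ 2 + MdA) * ((b - x) * Real.exp (MA * (x - a)))) x := by
      intro x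
      have h1 : HasDerivAt (fun σ : ℝ => MA * (σ - a)) MA x := by
        simpa using ((hasDerivAt_id x).sub_const a).const_mul MA
      have h2 : HasDerivAt (fun σ : ℝ => Real.exp (MA * (σ - a)))
          (Real.exp (MA * (x - a)) * MA) x := h1.exp
      have h3 : HasDerivAt (fun σ : ℝ => MA * (b - σ) + 1) (-MA) x := by
        simpa using (((hasDerivAt_id x).const_sub b).const_mul MA).add_const 1
      have h4 := ((((h2.mul h3).sub_const (Real.exp (MA * (t - a)) * (MA * (b - t) + 1))).div_const
        (MA ^ 2)).const_mul (MA ^ 2 + MdA))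
      refine h4.congr_deriv ?_
      congr 1
      rw [div_eq_iff (pow_ne_zero 2 hMA')]
      ring
    have H := image_norm_le_of_norm_deriv_right_le_deriv_boundary
      (f := fun σ => ((σ - b) • (A σ).comp (φ σ a) - φ σ a)
        - ((t - b) • (A t).comp (φ t a) - φ t a))
      (f' := fun τ => (τ - b) • ((A' τ).comp (φ τ a) + (A τ).comp ((A τ).comp (φ τ a))))
      (a := t) (b := b)
      (((((continuous_id.sub continuous_const).continuousOn).smul hgcont).sub
        hφcont).sub continuousOn_const |>.mono
        (fun x hx => hsubΩ ⟨hta.trans hx.1, hx.2⟩))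
      (fun x hx => ((hW x (hsubΩ ⟨hta.trans hx.1, hx.2.le⟩)).sub_const _).mono_of_mem_nhdsWithin
        (hnhds x ⟨hta.trans hx.1, hx.2⟩))
      (by simp)
      hBY
      (fun x hx => by
        show ‖(x - b) • ((A' x).comp (φ x a) + (A x).comp ((A x).comp (φ x a)))‖ ≤ _
        rw [norm_smul (x - b) ((A' x).comp (φ x a) + (A x).comp ((A x).comp (φ x a))),
          Real.norm_eq_abs, abs_of_nonpos (sub_nonpos.2 hx.2.le), neg_sub]
        calc (b - x) * ‖(A' x).comp (φ x a) + (A x).comp ((A x).comp (φ x a))‖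
            ≤ (b - x) * ((MA ^ 2 + MdA) * Real.exp (MA * (x - a))) :=
              mul_le_mul_of_nonneg_left (hGbound x ⟨hta.trans hx.1, hx.2.le⟩)
                (sub_nonneg.2 hx.2.le)
          _ = (MA ^ 2 + MdA) * ((b - x) * Real.exp (MA * (x - a))) := by ring)
      (Set.right_mem_Icc.2 htb)
    exact H
  -- the key algebraic identity
  have key : φ t a - (ContinuousLinearMap.id ℝ E + L • (φ b a - ContinuousLinearMap.id ℝ E))
      = (L - 1) • ((t - a) • (A t).comp (φ t a) - φ t a + ContinuousLinearMap.id ℝ E)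
        + L • (((b - b) • (A b).comp (φ b a) - φ b a)
          - ((t - b) • (A t).comp (φ t a) - φ t a)) := by
    have h6 : t - b = L * (b - a) - (b - a) := by
      rw [hLba]; ring
    rw [h6, ← hLba]
    module
  rw [key]
  -- final scalar computation
  have hexp : MA * (t - a) + 1 ≤ Real.exp (MA * (t - a)) := Real.add_one_le_exp _
  have hcoef : (1 - L) * (MA * (t - a) - 1) - L * (MA * (b - t) + 1) = -1 := by
    linear_combination (-MA) * hLba
  set Ew := Real.exp (MA * (t - a)) with hEw
  set Es := Real.exp (MA * (b - a)) with hEs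
  have hcore : (1 - L) * (Ew * (MA * (t - a) - 1) + 1)
      + L * (Es * (MA * (b - b) + 1) - Ew * (MA * (b - t) + 1))
      ≤ L * (Es - 1 - MA * (b - a)) := by
    have h9 : (1 - L) * (Ew * (MA * (t - a) - 1) + 1)
        + L * (Es * (MA * (b - b) + 1) - Ew * (MA * (b - t) + 1))
        - L * (Es - 1 - MA * (b - a)) = 1 + MA * (t - a) - Ew := by
      linear_combination Ew * hcoef + MA * hLba
    linarith [hexp, h9]
  calc ‖(L - 1) • ((t - a) • (A t).comp (φ t a) - φ t a + ContinuousLinearMap.id ℝ E)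
        + L • (((b - b) • (A b).comp (φ b a) - φ b a)
          - ((t - b) • (A t).comp (φ t a) - φ t a))‖
      ≤ ‖(L - 1) • ((t - a) • (A t).comp (φ t a) - φ t a + ContinuousLinearMap.id ℝ E)‖
        + ‖L • (((b - b) • (A b).comp (φ b a) - φ b a)
          - ((t - b) • (A t).comp (φ t a) - φ t a))‖ := norm_add_le _ _
    _ = (1 - L) * ‖(t - a) • (A t).comp (φ t a) - φ t a + ContinuousLinearMap.id ℝ E‖
        + L * ‖((b - b) • (A b).comp (φ b a) - φ b a)
          - ((t - b) • (A t).comp (φ t a) - φ t a)‖ := by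
        rw [norm_smul (L - 1) ((t - a) • (A t).comp (φ t a) - φ t a
            + ContinuousLinearMap.id ℝ E),
          norm_smul L (((b - b) • (A b).comp (φ b a) - φ b a)
            - ((t - b) • (A t).comp (φ t a) - φ t a)),
          Real.norm_eq_abs, Real.norm_eq_abs,
          abs_of_nonpos (show L - 1 ≤ 0 by linarith), abs_of_nonneg hL0]
        ring
    _ ≤ (1 - L) * ((MA ^ 2 + MdA) *
          ((Ew * (MA * (t - a) - 1) + 1) / MA ^ 2))
        + L * ((MA ^ 2 + MdA) *
          ((Es * (MA * (b - b) + 1) - Ew * (MA * (b - t) + 1)) / MA ^ 2)) := by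
        refine add_le_add (mul_le_mul_of_nonneg_left ?_ (by linarith))
          (mul_le_mul_of_nonneg_left ?_ hL0)
        · exact hnX
        · exact hnY
    _ = ((1 - L) * (Ew * (MA * (t - a) - 1) + 1)
        + L * (Es * (MA * (b - b) + 1) - Ew * (MA * (b - t) + 1)))
        * ((MA ^ 2 + MdA) / MA ^ 2) := by ring
    _ ≤ (L * (Es - 1 - MA * (b - a))) * ((MA ^ 2 + MdA) / MA ^ 2) :=
        mul_le_mul_of_nonneg_right hcore (by positivity)
    _ = L * ((Real.exp ((b - a) * MA) - 1 - (b - a) * MA) * (1 + MdA / MA ^ 2)) := by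
        rw [hEs, mul_comm (b - a) MA]
        field_simp
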